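/- Let ∥ be a Clifford-like parallelism and let α : H → H be a ring antiautomorphism of H, i.e., an additive bijection with α(1) = 1 and α(x·y) = α(y)·α(x) for all x, y ∈ H. Then α preserves ∥ if and only if α(ℱ) = 𝒜 \ ℱ. -/
import Mathlib


variable (F H : Type*) [Field F] [DivisionRing H] [Algebra F H]

/-- A *line* of the projective space `ℙ(H_F)`: a 2-dimensional `F`-subspace of `H`. -/
abbrev Line := {M : Submodule F H // Module.finrank F M = 2}

/-- `M ∥ℓ N` : there is `g ≠ 0` with `N = g·M`. -/
def LeftPar (M N : Submodule F H) : Prop :=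
  ∃ g : H, g ≠ 0 ∧ (N : Set H) = (fun m => g * m) '' (M : Set H)

/-- `M ∥r N` : there is `g ≠ 0` with `N = M·g`. -/
def RightPar (M N : Submodule F H) : Prop :=
  ∃ g : H, g ≠ 0 ∧ (N : Set H) = (fun m => m * g) '' (M : Set H)

/-- The left parallel class `Sℓ(M) = {N | N ∥ℓ M}`. -/
def leftClass (M : Line F H) : Set (Line F H) := {N | LeftPar F H N.1 M.1}

/-- The right parallel class `Sr(M) = {N | N ∥r M}`. -/
def rightClass (M : Line F H) : Set (Line F H) := {N | RightPar F H N.1 M.1}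

/-- The `∥`-class `S(M) = {N | N ∥ M}`. -/
def parClass (par : Line F H → Line F H → Prop) (M : Line F H) : Set (Line F H) :=
  {N | par N M}

/-- A parallelism: an equivalence relation on lines such that for every `x ≠ 0`
and every line `M` there is exactly one line `N` with `x ∈ N` and `N ∥ M`. -/
def IsParallelism (par : Line F H → Line F H → Prop) : Prop :=
  Equivalence par ∧
    ∀ x : H, x ≠ 0 → ∀ M : Line F H, ∃! N : Line F H, x ∈ N.1 ∧ par N M

/-- A Clifford-like parallelism: every `∥`-class is a left or a right parallel class. -/
def IsCliffordLike (par : Line F H → Line F H → Prop) : Prop :=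
  IsParallelism F H par ∧
    ∀ M : Line F H,
      parClass F H par M = leftClass F H M ∨ parClass F H par M = rightClass F H M

/-- The star `𝒜` of lines through `F·1`, i.e. the lines containing `1`. -/
def starLines : Set (Line F H) := {L | (1 : H) ∈ L.1}

/-- The set `ℱ` of lines of `𝒜` whose `∥`-class is a left parallel class. -/
def calF (par : Line F H → Line F H → Prop) : Set (Line F H) :=
  {L | (1 : H) ∈ L.1 ∧ parClass F H par L = leftClass F H L}

/-- A semilinear bijection of `H` (over some field automorphism of `F`). -/
def IsSemilinear (β : H → H) : Prop :=
  Function.Bijective β ∧ (∀ x y : H, β (x + y) = β x + β y) ∧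
    ∃ σ : F ≃+* F, ∀ (a : F) (x : H), β (a • x) = σ a • β x

/-- `β` preserves the parallelism `par`: for all lines `M, N`,
`M ∥ N ↔ β(M) ∥ β(N)`, where `β(M)` denotes the line whose carrier is `β '' M`. -/
def Preserves (β : H → H) (par : Line F H → Line F H → Prop) : Prop :=
  ∀ M N M' N' : Line F H,
    (M'.1 : Set H) = β '' (M.1 : Set H) →
    (N'.1 : Set H) = β '' (N.1 : Set H) →
    (par M N ↔ par M' N')

/-- The image `β(𝒢)` of a set of lines under `β`. -/
def imageLines (β : H → H) (G : Set (Line F H)) : Set (Line F H) :=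
  {L' | ∃ L ∈ G, (L'.1 : Set H) = β '' (L.1 : Set H)}

/-- The centre of `H` is exactly `F·1`. -/
def CenterEqF : Prop :=
  ∀ z : H, (∀ x : H, z * x = x * z) ↔ ∃ a : F, z = algebraMap F H a

/-- Ring automorphism of `H`, as a plain function. -/
def IsRingAutFn (α : H → H) : Prop :=
  Function.Bijective α ∧ (∀ x y : H, α (x + y) = α x + α y) ∧ α 1 = 1 ∧
    ∀ x y : H, α (x * y) = α x * α y

/-- Ring antiautomorphism of `H`, as a plain function. -/
def IsRingAntiAutFn (α : H → H) : Prop :=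
  Function.Bijective α ∧ (∀ x y : H, α (x + y) = α x + α y) ∧ α 1 = 1 ∧
    ∀ x y : H, α (x * y) = α y * α x

set_option linter.unusedSectionVars false

section Helpers

variable {F H}

lemma line_ext [Field F] [DivisionRing H] [Algebra F H] {M N : Line F H}
    (h : (M.1 : Set H) = (N.1 : Set H)) : M = N :=
  Subtype.ext (SetLike.coe_injective h)

section AntiAut
variable [Field F] [DivisionRing H] [Algebra F H]
variable {α : H → H} (hα : IsRingAntiAutFn H α)

include hα

lemma antiaut_zero : α 0 = 0 := by
  have := hα.2.1 0 0
  simp only [add_zero] at this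
  have h := congrArg (· - α 0) this
  simpa using h.symm

lemma antiaut_eq_zero_iff {x : H} : α x = 0 ↔ x = 0 := by
  constructor
  · intro h
    have := hα.1.1 (a₁ := x) (a₂ := 0)
    rw [antiaut_zero hα] at this
    exact this h
  · rintro rfl; exact antiaut_zero hα

/-- The inverse of a ring antiautomorphism is one as well. -/
lemma antiaut_inv : ∃ β : H → H, IsRingAntiAutFn H β ∧
    Function.LeftInverse β α ∧ Function.RightInverse β α := by
  classical
  let e := Equiv.ofBijective α hα.1
  refine ⟨e.symm, ⟨e.symm.bijective, ?_, ?_, ?_⟩, e.left_inv, e.right_inv⟩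
  · intro x y
    apply e.injective
    rw [Equiv.apply_symm_apply]
    show x + y = α (e.symm x + e.symm y)
    rw [hα.2.1]
    show x + y = e (e.symm x) + e (e.symm y)
    simp
  · apply e.injective
    rw [Equiv.apply_symm_apply]
    show (1 : H) = α 1
    rw [hα.2.2.1]
  · intro x y
    apply e.injective
    rw [Equiv.apply_symm_apply]
    show x * y = α (e.symm y * e.symm x)
    rw [hα.2.2.2]
    show x * y = e (e.symm x) * e (e.symm y)
    simp

end AntiAut

end Helpers
section Lines
variable {F H} [Field F] [DivisionRing H] [Algebra F H]

lemma finrank_span_pair {u v : H} (h : LinearIndependent F ![u, v]) :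
    Module.finrank F (Submodule.span F ({u, v} : Set H)) = 2 := by
  have hr : ({u, v} : Set H) = Set.range ![u, v] := by
    ext x; simp only [Matrix.range_cons, Matrix.range_empty, Set.mem_insert_iff,
      Set.mem_singleton_iff, Set.union_singleton, Set.union_empty]; tauto
  rw [hr, finrank_span_eq_card h]
  simp

lemma line_exists_pair (L : Line F H) :
    ∃ u v : H, LinearIndependent F ![u, v] ∧ L.1 = Submodule.span F ({u, v} : Set H) := by
  haveI : FiniteDimensional F L.1 := FiniteDimensional.of_finrank_pos (by rw [L.2]; norm_num)
  let b := Module.finBasisOfFinrankEq F L.1 L.2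
  have hind : LinearIndependent F (L.1.subtype ∘ b) :=
    b.linearIndependent.map' L.1.subtype (Submodule.ker_subtype L.1)
  refine ⟨b 0, b 1, ?_, ?_⟩
  · have : ![((b 0 : H)), (b 1 : H)] = L.1.subtype ∘ b := by
      funext i; fin_cases i <;> simp
    rw [this]; exact hind
  · have h1 : Submodule.map L.1.subtype (Submodule.span F (Set.range b)) = L.1 := by
      rw [b.span_eq, Submodule.map_subtype_top]
    rw [Submodule.map_span] at h1
    have himg : L.1.subtype '' Set.range ⇑b = ({(b 0 : H), (b 1 : H)} : Set H) := by
      ext x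
      constructor
      · rintro ⟨y, ⟨i, rfl⟩, rfl⟩
        fin_cases i
        · exact Or.inl rfl
        · exact Or.inr rfl
      · rintro (rfl | rfl)
        · exact ⟨b 0, Set.mem_range_self 0, rfl⟩
        · exact ⟨b 1, Set.mem_range_self 1, rfl⟩
    rw [himg] at h1
    exact h1.symm

lemma mulLeft_image_line {g : H} (hg : g ≠ 0) (L : Line F H) :
    ∃ L' : Line F H, (L'.1 : Set H) = (fun m => g * m) '' (L.1 : Set H) := by
  let e : H ≃ₗ[F] H := LinearEquiv.ofLinear (LinearMap.mulLeft F g) (LinearMap.mulLeft F g⁻¹)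
    (by ext x; simp [LinearMap.mulLeft, mul_inv_cancel_left₀ hg])
    (by ext x; simp [LinearMap.mulLeft, inv_mul_cancel_left₀ hg])
  refine ⟨⟨Submodule.map (e : H →ₗ[F] H) L.1, by rw [LinearEquiv.finrank_map_eq]; exact L.2⟩, ?_⟩
  simp only [Submodule.map_coe]
  rfl

lemma mulRight_image_line {g : H} (hg : g ≠ 0) (L : Line F H) :
    ∃ L' : Line F H, (L'.1 : Set H) = (fun m => m * g) '' (L.1 : Set H) := by
  let e : H ≃ₗ[F] H := LinearEquiv.ofLinear (LinearMap.mulRight F g) (LinearMap.mulRight F g⁻¹)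
    (by ext x; simp [LinearMap.mulRight, inv_mul_cancel_right₀ hg])
    (by ext x; simp [LinearMap.mulRight, mul_inv_cancel_right₀ hg])
  refine ⟨⟨Submodule.map (e : H →ₗ[F] H) L.1, by rw [LinearEquiv.finrank_map_eq]; exact L.2⟩, ?_⟩
  simp only [Submodule.map_coe]
  rfl

end Lines

section Scalar
variable {F H} [Field F] [DivisionRing H] [Algebra F H]
variable (hcenter : CenterEqF F H) {α : H → H} (hα : IsRingAntiAutFn H α)
include hcenter hα

lemma antiaut_scalar : ∀ a : F, ∃ b : F, (b = 0 ↔ a = 0) ∧ ∀ x : H, α (a • x) = b • α x := by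
  intro a
  have hcentral : ∀ y : H, α (algebraMap F H a) * y = y * α (algebraMap F H a) := by
    intro y
    obtain ⟨z, rfl⟩ := hα.1.2 y
    rw [← hα.2.2.2, ← hα.2.2.2, Algebra.commutes]
  obtain ⟨b, hb⟩ := (hcenter (α (algebraMap F H a))).1 hcentral
  have hinj := (algebraMap F H).injective
  refine ⟨b, ⟨?_, ?_⟩, ?_⟩
  · intro h
    subst h
    rw [map_zero] at hb
    have h0 : algebraMap F H a = 0 := (antiaut_eq_zero_iff hα).1 hb
    exact hinj (by rw [h0, map_zero])
  · rintro rfl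
    have h0 : algebraMap F H b = 0 := by rw [← hb, map_zero, antiaut_zero hα]
    exact hinj (by rw [h0, map_zero])
  · intro x
    rw [Algebra.smul_def, hα.2.2.2, Algebra.smul_def, ← hb, hcentral]

lemma antiaut_image_line (L : Line F H) :
    ∃ L' : Line F H, (L'.1 : Set H) = α '' (L.1 : Set H) := by
  obtain ⟨β, hβ, hβα, hαβ⟩ := antiaut_inv hα
  obtain ⟨u, v, huv, hspan⟩ := line_exists_pair L
  have hs := antiaut_scalar hcenter hα
  have hs' := antiaut_scalar hcenter hβ
  have hrep : ∀ (a : F) (y : H), a • α y = α ((Classical.choose (hs' a)) • y) := by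
    intro a y
    obtain ⟨_, h2⟩ := Classical.choose_spec (hs' a)
    have := h2 (α y)
    rw [hβα y] at this
    calc a • α y = α (β (a • α y)) := (hαβ _).symm
    _ = α (Classical.choose (hs' a) • y) := by rw [this]
  refine ⟨⟨Submodule.span F ({α u, α v} : Set H), ?_⟩, ?_⟩
  · apply finrank_span_pair
    rw [LinearIndependent.pair_iff]
    intro s t hst
    have hadd := hβ.2.1 (s • α u) (t • α v)
    rw [hst, antiaut_zero hβ] at hadd
    obtain ⟨hs0, hseq⟩ := Classical.choose_spec (hs' s)
    obtain ⟨ht0, hteq⟩ := Classical.choose_spec (hs' t)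
    rw [hseq, hteq, hβα, hβα] at hadd
    obtain ⟨h1, h2⟩ := LinearIndependent.pair_iff.1 huv _ _ hadd.symm
    exact ⟨hs0.1 h1, ht0.1 h2⟩
  · show (Submodule.span F ({α u, α v} : Set H) : Set H) = _
    rw [hspan]
    ext x
    simp only [SetLike.mem_coe, Set.mem_image]
    constructor
    · intro hx
      obtain ⟨a, b, rfl⟩ := Submodule.mem_span_pair.1 hx
      refine ⟨Classical.choose (hs' a) • u + Classical.choose (hs' b) • v, ?_, ?_⟩
      · exact Submodule.mem_span_pair.2 ⟨_, _, rfl⟩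
      · rw [hα.2.1, ← hrep, ← hrep]
    · rintro ⟨y, hy, rfl⟩
      obtain ⟨a, b, rfl⟩ := Submodule.mem_span_pair.1 hy
      rw [hα.2.1]
      obtain ⟨_, haeq⟩ := Classical.choose_spec (hs a)
      obtain ⟨_, hbeq⟩ := Classical.choose_spec (hs b)
      rw [haeq, hbeq]
      exact Submodule.mem_span_pair.2 ⟨_, _, rfl⟩

end Scalar
section Swap
variable {F H} [Field F] [DivisionRing H] [Algebra F H]
variable {α : H → H} (hα : IsRingAntiAutFn H α)
include hα

lemma antiaut_image_comp_self (β : H → H) (hβα : Function.LeftInverse β α) (s : Set H) :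
    β '' (α '' s) = s := by
  rw [Set.image_image, Set.image_congr (fun x _ => hβα x)]
  exact Set.image_id s

lemma antiaut_leftPar_iff {M L M' L' : Line F H}
    (hM : (M'.1 : Set H) = α '' (M.1 : Set H)) (hL : (L'.1 : Set H) = α '' (L.1 : Set H)) :
    LeftPar F H M.1 L.1 ↔ RightPar F H M'.1 L'.1 := by
  obtain ⟨β, hβ, hβα, hαβ⟩ := antiaut_inv hα
  constructor
  · rintro ⟨g, hg, heq⟩
    refine ⟨α g, fun h0 => hg ((antiaut_eq_zero_iff hα).1 h0), ?_⟩
    rw [hL, heq, hM, Set.image_image, Set.image_image]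
    exact Set.image_congr (fun m _ => hα.2.2.2 g m)
  · rintro ⟨h, hh, heq⟩
    refine ⟨β h, fun h0 => hh (by rw [← hαβ h, h0, antiaut_zero hα]), ?_⟩
    have h2 := congrArg (Set.image β) heq
    rw [hL, hM, antiaut_image_comp_self hα β hβα, Set.image_image, Set.image_image] at h2
    rw [h2]
    refine Set.image_congr (fun m _ => ?_)
    rw [hβ.2.2.2, hβα]

lemma antiaut_rightPar_iff {M L M' L' : Line F H}
    (hM : (M'.1 : Set H) = α '' (M.1 : Set H)) (hL : (L'.1 : Set H) = α '' (L.1 : Set H)) :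
    RightPar F H M.1 L.1 ↔ LeftPar F H M'.1 L'.1 := by
  obtain ⟨β, hβ, hβα, hαβ⟩ := antiaut_inv hα
  constructor
  · rintro ⟨g, hg, heq⟩
    refine ⟨α g, fun h0 => hg ((antiaut_eq_zero_iff hα).1 h0), ?_⟩
    rw [hL, heq, hM, Set.image_image, Set.image_image]
    exact Set.image_congr (fun m _ => hα.2.2.2 m g)
  · rintro ⟨h, hh, heq⟩
    refine ⟨β h, fun h0 => hh (by rw [← hαβ h, h0, antiaut_zero hα]), ?_⟩
    have h2 := congrArg (Set.image β) heq
    rw [hL, hM, antiaut_image_comp_self hα β hβα, Set.image_image, Set.image_image] at h2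
    rw [h2]
    refine Set.image_congr (fun m _ => ?_)
    rw [hβ.2.2.2, hβα]

end Swap

section Quadratic
variable {F H} [Field F] [DivisionRing H] [Algebra F H]

lemma inv_mem_of_mul_closed (hFD : FiniteDimensional F H)
    (S : Submodule F H) (h1 : (1 : H) ∈ S) (hmul : ∀ x ∈ S, ∀ y ∈ S, x * y ∈ S)
    {x : H} (hx : x ∈ S) (hx0 : x ≠ 0) : x⁻¹ ∈ S := by
  let f : S →ₗ[F] S :=
    { toFun := fun y => ⟨x * y.1, hmul x hx y.1 y.2⟩
      map_add' := by intro y z; ext; simp [mul_add]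
      map_smul' := by intro c y; ext; simp [Algebra.mul_smul_comm] }
  have hinj : Function.Injective f := by
    intro y z h
    have h' : x * y.1 = x * z.1 := congrArg Subtype.val h
    ext
    exact mul_left_cancel₀ hx0 h'
  obtain ⟨y, hy⟩ := LinearMap.injective_iff_surjective.1 hinj ⟨1, h1⟩
  have hxy : x * y.1 = 1 := congrArg Subtype.val hy
  rw [inv_eq_of_mul_eq_one_right hxy]
  exact y.2

lemma exists_quadratic (hcenter : CenterEqF F H) (hdim : Module.finrank F H = 4) (u : H) :
    ∃ p q : F, u * u = algebraMap F H p + algebraMap F H q * u := by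
  haveI hFD : FiniteDimensional F H := FiniteDimensional.of_finrank_pos (by rw [hdim]; norm_num)
  by_cases h2 : u ∈ Submodule.span F ({1} : Set H)
  · obtain ⟨a, ha⟩ := Submodule.mem_span_singleton.1 h2
    exact ⟨0, a, by rw [map_zero, zero_add, Algebra.algebraMap_eq_smul_one, ha]⟩
  by_cases h3 : u * u ∈ Submodule.span F ({(1 : H), u} : Set H)
  · obtain ⟨p, q, hpq⟩ := Submodule.mem_span_pair.1 h3
    exact ⟨p, q, by rw [← hpq, Algebra.algebraMap_eq_smul_one, ← Algebra.smul_def]⟩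
  exfalso
  set K := Algebra.adjoin F ({u} : Set H) with hK
  set S := Subalgebra.toSubmodule K with hS
  have huS : u ∈ S := Algebra.subset_adjoin rfl
  have h1S : (1 : H) ∈ S := one_mem K
  have hmulS : ∀ x ∈ S, ∀ y ∈ S, x * y ∈ S := fun x hx y hy => Subalgebra.mul_mem K hx hy
  have hcomm : ∀ x ∈ S, u * x = x * u := by
    intro x hx
    have hle : K ≤ Subalgebra.centralizer F ({u} : Set H) := by
      apply Algebra.adjoin_le
      intro y hy
      rw [Set.mem_singleton_iff] at hy
      subst hy
      exact (Subalgebra.mem_centralizer_iff F).2 (fun g hg => by rw [Set.mem_singleton_iff] at hg; rw [hg])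
    exact (Subalgebra.mem_centralizer_iff F).1 (hle hx) u rfl
  -- the pair 1, u is independent
  have hpair : LinearIndependent F ![(1 : H), u] := by
    rw [LinearIndependent.pair_iff' one_ne_zero]
    intro a ha
    exact h2 (ha ▸ Submodule.mem_span_singleton.2 ⟨a, rfl⟩)
  have hspan_le : Submodule.span F ({(1 : H), u} : Set H) < S := by
    refine lt_of_le_of_ne (Submodule.span_le.2 ?_) (fun heq => h3 ?_)
    · rintro x (rfl | rfl)
      · exact h1S
      · exact huS
    · rw [heq]; exact hmulS u huS u huS
  have hS3 : 3 ≤ Module.finrank F S := by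
    have := Submodule.finrank_lt_finrank_of_lt hspan_le
    rw [finrank_span_pair hpair] at this
    omega
  have hS4 : Module.finrank F S ≤ 4 := hdim ▸ Submodule.finrank_le S
  rcases (by omega : Module.finrank F S = 3 ∨ Module.finrank F S = 4) with hd | hd
  · -- dimension 3 : impossible
    have hStop : S ≠ ⊤ := fun h => by rw [h, finrank_top, hdim] at hd; omega
    obtain ⟨v, hv⟩ : ∃ v : H, v ∉ S := by
      by_contra hc
      push_neg at hc
      exact hStop (Submodule.eq_top_iff'.2 hc)
    have hv0 : v ≠ 0 := fun h => hv (h ▸ S.zero_mem)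
    have hinj : Function.Injective (LinearMap.mulRight F v) := by
      intro x y h
      exact mul_right_cancel₀ hv0 h
    set Sv := Submodule.map (LinearMap.mulRight F v) S with hSv
    have hdv : Module.finrank F Sv = 3 := by
      rw [← hd]
      exact (LinearEquiv.finrank_eq (Submodule.equivMapOfInjective _ hinj S)).symm
    have hsum := Submodule.finrank_sup_add_finrank_inf_eq S Sv
    have hsup : Module.finrank F ↥(S ⊔ Sv) ≤ 4 := hdim ▸ Submodule.finrank_le _
    have hinf : Module.finrank F ↥(S ⊓ Sv) ≠ 0 := by omega
    have hne : S ⊓ Sv ≠ ⊥ := fun h => hinf (by rw [h]; exact finrank_bot F H)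
    obtain ⟨y, hy, hy0⟩ := (S ⊓ Sv).ne_bot_iff.1 hne
    obtain ⟨hyS, hySv⟩ := Submodule.mem_inf.1 hy
    obtain ⟨x, hxS, hxv⟩ := Submodule.mem_map.1 hySv
    have hxv' : x * v = y := hxv
    have hx0 : x ≠ 0 := fun h => hy0 (by rw [← hxv', h, zero_mul])
    have hxinv : x⁻¹ ∈ S := inv_mem_of_mul_closed hFD S h1S hmulS hxS hx0
    apply hv
    have : v = x⁻¹ * y := by rw [← hxv', inv_mul_cancel_left₀ hx0]
    rw [this]
    exact hmulS _ hxinv _ hyS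
  · -- dimension 4 : u would be central
    have hStop : S = ⊤ := Submodule.eq_top_of_finrank_eq (by rw [hd, hdim])
    have hcen : ∀ x : H, u * x = x * u := fun x => hcomm x (hStop ▸ Submodule.mem_top)
    obtain ⟨a, ha⟩ := (hcenter u).1 hcen
    exact h2 (ha ▸ Submodule.mem_span_singleton.2 ⟨a, (Algebra.algebraMap_eq_smul_one a).symm⟩)

end Quadratic
section LeftNeRight
variable {F H} [Field F] [DivisionRing H] [Algebra F H]

lemma leftClass_ne_rightClass (hcenter : CenterEqF F H) (hdim : Module.finrank F H = 4)
    (L : Line F H) (h1 : (1 : H) ∈ L.1) :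
    leftClass F H L ≠ rightClass F H L := by
  intro hEq
  haveI hFD : FiniteDimensional F H := FiniteDimensional.of_finrank_pos (by rw [hdim]; norm_num)
  -- pick `u ∈ L` with `1, u` independent
  obtain ⟨u, huL, hu1⟩ : ∃ u, u ∈ L.1 ∧ u ∉ Submodule.span F ({(1 : H)} : Set H) := by
    by_contra hc
    push_neg at hc
    have hle : L.1 ≤ Submodule.span F ({(1 : H)} : Set H) := hc
    have := Submodule.finrank_mono (t := Submodule.span F ({(1 : H)} : Set H)) hle
    rw [L.2, finrank_span_singleton (one_ne_zero)] at this
    omega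
  have hpair : LinearIndependent F ![(1 : H), u] := by
    rw [LinearIndependent.pair_iff' one_ne_zero]
    intro a ha
    exact hu1 (ha ▸ Submodule.mem_span_singleton.2 ⟨a, rfl⟩)
  have hLspan : L.1 = Submodule.span F ({(1 : H), u} : Set H) := by
    refine (Submodule.eq_of_le_of_finrank_le (Submodule.span_le.2 ?_) ?_).symm
    · rintro x (rfl | rfl)
      · exact h1
      · exact huL
    · rw [L.2, finrank_span_pair hpair]
  obtain ⟨p, q, hpq⟩ := exists_quadratic hcenter hdim u
  have hmem : ∀ x ∈ L.1, ∃ a b : F, a • (1 : H) + b • u = x := fun x hx =>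
    Submodule.mem_span_pair.1 (hLspan ▸ hx)
  -- product formula
  have key : ∀ a b c d : F, (a • (1 : H) + b • u) * (c • (1 : H) + d • u) =
      (a * c + b * d * p) • (1 : H) + (a * d + b * c + b * d * q) • u := by
    intro a b c d
    have h1' : (a • (1 : H) + b • u) * (c • (1 : H) + d • u) =
        (a * c) • ((1 : H) * 1) + (a * d) • ((1 : H) * u) +
          ((b * c) • (u * 1) + (b * d) • (u * u)) := by
      rw [add_mul, mul_add, mul_add, smul_mul_smul_comm, smul_mul_smul_comm,
        smul_mul_smul_comm, smul_mul_smul_comm]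
    rw [h1', hpq]
    simp only [one_mul, mul_one]
    rw [← Algebra.smul_def, Algebra.algebraMap_eq_smul_one]
    module
  -- closure under multiplication
  have hmul : ∀ x ∈ L.1, ∀ y ∈ L.1, x * y ∈ L.1 := by
    intro x hx y hy
    obtain ⟨a, b, rfl⟩ := hmem x hx
    obtain ⟨c, d, rfl⟩ := hmem y hy
    rw [key, hLspan]
    exact Submodule.mem_span_pair.2 ⟨_, _, rfl⟩
  -- commutativity inside L
  have hcommL : ∀ x ∈ L.1, ∀ y ∈ L.1, x * y = y * x := by
    intro x hx y hy
    obtain ⟨a, b, rfl⟩ := hmem x hx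
    obtain ⟨c, d, rfl⟩ := hmem y hy
    rw [key, key]
    module
  -- conjugation stability
  have hconj : ∀ g : H, g ≠ 0 → ∀ l ∈ L.1, g * l * g⁻¹ ∈ L.1 := by
    intro g hg l hl
    obtain ⟨Lg, hLg⟩ := mulLeft_image_line hg L
    have hmemLeft : Lg ∈ leftClass F H L := by
      refine ⟨g⁻¹, inv_ne_zero hg, ?_⟩
      rw [hLg, Set.image_image, Set.image_congr (fun m _ => inv_mul_cancel_left₀ hg m)]
      exact (Set.image_id _).symm
    rw [hEq] at hmemLeft
    obtain ⟨h, hh, heq⟩ := hmemLeft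
    rw [hLg, Set.image_image] at heq
    have h1' : (1 : H) ∈ (fun m => g * m * h) '' (L.1 : Set H) := by
      rw [← heq]; exact h1
    obtain ⟨l₀, hl₀L, hl₀⟩ := h1'
    have hl₀0 : l₀ ≠ 0 := by rintro rfl; simp at hl₀
    have hhval : h = l₀⁻¹ * g⁻¹ := by
      rw [← mul_inv_rev]
      exact (inv_eq_of_mul_eq_one_right hl₀).symm
    have hmemim : g * (l * l₀) * h ∈ (L.1 : Set H) := by
      rw [heq]
      exact ⟨l * l₀, hmul l hl l₀ hl₀L, rfl⟩
    have hcalc : g * (l * l₀) * h = g * l * g⁻¹ := by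
      rw [hhval]
      have : g * (l * l₀) * (l₀⁻¹ * g⁻¹) = g * l * (l₀ * l₀⁻¹) * g⁻¹ := by
        noncomm_ring
      rw [this, mul_inv_cancel₀ hl₀0, mul_one]
    rw [← hcalc]
    exact hmemim
  -- dichotomy for conjugates of u
  have hroot : ∀ g : H, g ≠ 0 → g * u = u * g ∨ g * u = (algebraMap F H q - u) * g := by
    intro g hg
    set c := g * u * g⁻¹ with hc
    have hcL : c ∈ L.1 := hconj g hg u huL
    have hc2 : c * c = algebraMap F H p + algebraMap F H q * c := by
      have e1 : c * c = g * (u * u) * g⁻¹ := by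
        rw [hc]
        have e0 : g * u * g⁻¹ * (g * u * g⁻¹) = g * u * (g⁻¹ * g) * u * g⁻¹ := by noncomm_ring
        rw [e0, inv_mul_cancel₀ hg, mul_one, mul_assoc g u u]
      have e2 : g * (algebraMap F H p + algebraMap F H q * u) * g⁻¹ =
          algebraMap F H p + algebraMap F H q * (g * u * g⁻¹) := by
        rw [mul_add, add_mul]
        congr 1
        · rw [← Algebra.commutes p g, mul_assoc, mul_inv_cancel₀ hg, mul_one]
        · rw [show g * (algebraMap F H q * u) = algebraMap F H q * (g * u) by
            rw [← mul_assoc, ← Algebra.commutes q g, mul_assoc], mul_assoc]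
      rw [e1, hpq, e2, ← hc]
    have hcu : c * u = u * c := hcommL c hcL u huL
    have hfac : (c - u) * (c + u - algebraMap F H q) = 0 := by
      have hq : c * algebraMap F H q = algebraMap F H q * c := (Algebra.commutes q c).symm
      have hq' : u * algebraMap F H q = algebraMap F H q * u := (Algebra.commutes q u).symm
      have expand : (c - u) * (c + u - algebraMap F H q) =
          (c * c - c * algebraMap F H q) - (u * u - u * algebraMap F H q) + (c * u - u * c) := by
        noncomm_ring
      rw [expand, hq, hq', hc2, hpq, hcu]
      noncomm_ring
    rcases mul_eq_zero.1 hfac with h0 | h0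
    · left
      have hcEq : c = u := by rwa [sub_eq_zero] at h0
      calc g * u = g * u * g⁻¹ * g := (inv_mul_cancel_right₀ hg _).symm
        _ = u * g := by rw [← hc, hcEq]
    · right
      have hcEq : c = algebraMap F H q - u := by
        have : c - (algebraMap F H q - u) = c + u - algebraMap F H q := by abel
        rw [← sub_eq_zero, this]
        exact h0
      calc g * u = g * u * g⁻¹ * g := (inv_mul_cancel_right₀ hg _).symm
        _ = (algebraMap F H q - u) * g := by rw [← hc, hcEq]
  have hroot' : ∀ g : H, g * u = u * g ∨ g * u = (algebraMap F H q - u) * g := by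
    intro g
    by_cases hg : g = 0
    · left; simp [hg]
    · exact hroot g hg
  have hall : (∀ g : H, g * u = u * g) ∨
      (∀ g : H, g * u = (algebraMap F H q - u) * g) := by
    by_cases hAall : ∀ g : H, g * u = u * g
    · exact Or.inl hAall
    right
    push_neg at hAall
    obtain ⟨b, hb⟩ := hAall
    have hbB : b * u = (algebraMap F H q - u) * b := (hroot' b).resolve_left hb
    intro g
    rcases hroot' g with hg | hg
    · rcases hroot' (g + b) with hgb | hgb
      · rw [add_mul, mul_add, hg] at hgb
        exact absurd (add_left_cancel hgb) hb
      · rw [add_mul, mul_add] at hgb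
        rw [hbB] at hgb
        exact add_right_cancel hgb
    · exact hg
  have hcentral : ∀ x : H, u * x = x * u := by
    rcases hall with hAall | hBall
    · intro x; exact (hAall x).symm
    · have h1B := hBall 1
      rw [one_mul, mul_one] at h1B
      intro x
      have hx := hBall x
      rw [← h1B] at hx
      exact hx.symm
  obtain ⟨a, ha⟩ := (hcenter u).1 hcentral
  exact hu1 (ha ▸ Submodule.mem_span_singleton.2 ⟨a, (Algebra.algebraMap_eq_smul_one a).symm⟩)

end LeftNeRight
section Assembly
variable {F H} [Field F] [DivisionRing H] [Algebra F H]

lemma mem_parClass_iff {par : Line F H → Line F H → Prop} {M N : Line F H} :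
    N ∈ parClass F H par M ↔ par N M := Iff.rfl

lemma mem_calF_iff {par : Line F H → Line F H → Prop} {L : Line F H} :
    L ∈ calF F H par ↔ (1 : H) ∈ L.1 ∧ parClass F H par L = leftClass F H L := Iff.rfl

lemma parClass_eq_right_of_not_calF {par : Line F H → Line F H → Prop}
    (hpar : IsCliffordLike F H par) {L : Line F H}
    (h1 : (1 : H) ∈ L.1) (hnF : L ∉ calF F H par) :
    parClass F H par L = rightClass F H L := by
  rcases hpar.2 L with h | h
  · exact absurd ⟨h1, h⟩ hnF
  · exact h

lemma preserves_dir (hcenter : CenterEqF F H) (hdim : Module.finrank F H = 4)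
    {par : Line F H → Line F H → Prop} (hpar : IsCliffordLike F H par)
    {β : H → H} (hβ : IsRingAntiAutFn H β)
    (himg : imageLines F H β (calF F H par) = starLines F H \ calF F H par) :
    ∀ M N M' N' : Line F H, (M'.1 : Set H) = β '' (M.1 : Set H) →
      (N'.1 : Set H) = β '' (N.1 : Set H) → par M N → par M' N' := by
  intro M N M' N' hM hN hMN
  obtain ⟨L, ⟨hL1, hLM⟩, -⟩ := hpar.1.2 1 one_ne_zero M
  obtain ⟨L', hL'⟩ := antiaut_image_line hcenter hβ L
  have hML : par M L := hpar.1.1.symm hLM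
  have hNL : par N L := hpar.1.1.trans (hpar.1.1.symm hMN) hML
  have hL'1 : (1 : H) ∈ L'.1 := by
    rw [← SetLike.mem_coe, hL']
    exact ⟨1, hL1, hβ.2.2.1⟩
  by_cases hLF : L ∈ calF F H par
  · have hL'nF : L' ∉ calF F H par := by
      have hmem : L' ∈ starLines F H \ calF F H par := by
        rw [← himg]; exact ⟨L, hLF, hL'⟩
      exact hmem.2
    have hright : parClass F H par L' = rightClass F H L' :=
      parClass_eq_right_of_not_calF hpar hL'1 hL'nF
    have hMleft : LeftPar F H M.1 L.1 := by
      have h : M ∈ parClass F H par L := hML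
      rwa [hLF.2] at h
    have hNleft : LeftPar F H N.1 L.1 := by
      have h : N ∈ parClass F H par L := hNL
      rwa [hLF.2] at h
    have hM' : par M' L' := by
      have h : M' ∈ rightClass F H L' := (antiaut_leftPar_iff hβ hM hL').1 hMleft
      rw [← hright] at h; exact h
    have hN' : par N' L' := by
      have h : N' ∈ rightClass F H L' := (antiaut_leftPar_iff hβ hN hL').1 hNleft
      rw [← hright] at h; exact h
    exact hpar.1.1.trans hM' (hpar.1.1.symm hN')
  · have hrightL : parClass F H par L = rightClass F H L :=
      parClass_eq_right_of_not_calF hpar hL1 hLF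
    have hL'F : L' ∈ calF F H par := by
      by_contra hc
      have hmem : L' ∈ starLines F H \ calF F H par := ⟨hL'1, hc⟩
      rw [← himg] at hmem
      obtain ⟨L₀, hL₀F, hL₀⟩ := hmem
      have hEq : L₀ = L :=
        line_ext (Set.image_injective.2 hβ.1.1 (hL₀.symm.trans hL'))
      exact hLF (hEq ▸ hL₀F)
    have hMright : RightPar F H M.1 L.1 := by
      have h : M ∈ parClass F H par L := hML
      rwa [hrightL] at h
    have hNright : RightPar F H N.1 L.1 := by
      have h : N ∈ parClass F H par L := hNL
      rwa [hrightL] at h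
    have hM' : par M' L' := by
      have h : M' ∈ leftClass F H L' := (antiaut_rightPar_iff hβ hM hL').1 hMright
      rw [← hL'F.2] at h; exact h
    have hN' : par N' L' := by
      have h : N' ∈ leftClass F H L' := (antiaut_rightPar_iff hβ hN hL').1 hNright
      rw [← hL'F.2] at h; exact h
    exact hpar.1.1.trans hM' (hpar.1.1.symm hN')

lemma imageLines_inv (hcenter : CenterEqF F H)
    {par : Line F H → Line F H → Prop}
    {α β : H → H} (hα : IsRingAntiAutFn H α) (hβ : IsRingAntiAutFn H β)
    (hβα : Function.LeftInverse β α) (hαβ : Function.RightInverse β α)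
    (himg : imageLines F H α (calF F H par) = starLines F H \ calF F H par) :
    imageLines F H β (calF F H par) = starLines F H \ calF F H par := by
  ext L'
  constructor
  · rintro ⟨L, hLF, hc⟩
    have h1 : (1 : H) ∈ L'.1 := by
      rw [← SetLike.mem_coe, hc]; exact ⟨1, hLF.1, hβ.2.2.1⟩
    refine ⟨h1, fun hL'F => ?_⟩
    have hLc : (L.1 : Set H) = α '' (L'.1 : Set H) := by
      rw [hc, antiaut_image_comp_self hβ α hαβ]
    have hmem : L ∈ starLines F H \ calF F H par := by
      rw [← himg]; exact ⟨L', hL'F, hLc⟩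
    exact hmem.2 hLF
  · rintro ⟨h1, hnF⟩
    obtain ⟨M₀, hM₀⟩ := antiaut_image_line hcenter hα L'
    by_cases hM₀F : M₀ ∈ calF F H par
    · refine ⟨M₀, hM₀F, ?_⟩
      rw [hM₀, antiaut_image_comp_self hα β hβα]
    · exfalso
      have hmem : M₀ ∈ starLines F H \ calF F H par := by
        refine ⟨?_, hM₀F⟩
        show (1 : H) ∈ M₀.1
        rw [← SetLike.mem_coe, hM₀]
        exact ⟨1, h1, hα.2.2.1⟩
      rw [← himg] at hmem
      obtain ⟨L₀, hL₀F, hL₀⟩ := hmem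
      have hEq : L₀ = L' :=
        line_ext (Set.image_injective.2 hα.1.1 (hL₀.symm.trans hM₀))
      exact hnF (hEq ▸ hL₀F)

end Assembly

/-- An antiautomorphism `α` of the quaternion skew field `H` preserves a
Clifford-like parallelism `∥` if and only if `α(ℱ) = 𝒜 \ ℱ`. -/
theorem ringAntiAut_preserves_iff
    (hcenter : CenterEqF F H) (hdim : Module.finrank F H = 4)
    (par : Line F H → Line F H → Prop) (hpar : IsCliffordLike F H par)
    (α : H → H) (hα : IsRingAntiAutFn H α) :
    Preserves F H α par ↔
      imageLines F H α (calF F H par) = starLines F H \ calF F H par := by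
  obtain ⟨β, hβ, hβα, hαβ⟩ := antiaut_inv hα
  constructor
  · intro hpres
    ext L'
    constructor
    · rintro ⟨L, hLF, hc⟩
      have h1 : (1 : H) ∈ L'.1 := by
        rw [← SetLike.mem_coe, hc]; exact ⟨1, hLF.1, hα.2.2.1⟩
      refine ⟨h1, fun hL'F => ?_⟩
      apply leftClass_ne_rightClass hcenter hdim L' h1
      rw [← hL'F.2]
      ext N'
      obtain ⟨N, hN⟩ := antiaut_image_line hcenter hβ N'
      have hN' : (N'.1 : Set H) = α '' (N.1 : Set H) := by
        rw [hN, antiaut_image_comp_self hβ α hαβ]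
      constructor
      · intro hmem
        have hNL : par N L := (hpres N L N' L' hN' hc).2 hmem
        have hleft : N ∈ leftClass F H L := by rw [← hLF.2]; exact hNL
        exact (antiaut_leftPar_iff hα hN' hc).1 hleft
      · intro hmem
        have hleft : LeftPar F H N.1 L.1 := (antiaut_leftPar_iff hα hN' hc).2 hmem
        have hNL : N ∈ parClass F H par L := by rw [hLF.2]; exact hleft
        exact (hpres N L N' L' hN' hc).1 hNL
    · rintro ⟨h1, hnF⟩
      obtain ⟨L, hL⟩ := antiaut_image_line hcenter hβ L'
      have hc : (L'.1 : Set H) = α '' (L.1 : Set H) := by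
        rw [hL, antiaut_image_comp_self hβ α hαβ]
      have h1' : (1 : H) ∈ L'.1 := h1
      refine ⟨L, ⟨?_, ?_⟩, hc⟩
      · rw [← SetLike.mem_coe, hL]; exact ⟨1, h1', hβ.2.2.1⟩
      · have hright : parClass F H par L' = rightClass F H L' :=
          parClass_eq_right_of_not_calF hpar h1' hnF
        ext N
        obtain ⟨N', hN'⟩ := antiaut_image_line hcenter hα N
        constructor
        · intro hmem
          have hp : par N' L' := (hpres N L N' L' hN' hc).1 hmem
          have hr : N' ∈ rightClass F H L' := by rw [← hright]; exact hp
          exact (antiaut_leftPar_iff hα hN' hc).2 hr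
        · intro hmem
          have hr : RightPar F H N'.1 L'.1 := (antiaut_leftPar_iff hα hN' hc).1 hmem
          have hp : N' ∈ parClass F H par L' := by rw [hright]; exact hr
          exact (hpres N L N' L' hN' hc).2 hp
  · intro himg
    intro M N M' N' hM hN
    constructor
    · exact preserves_dir hcenter hdim hpar hα himg M N M' N' hM hN
    · intro h
      have himgβ := imageLines_inv hcenter hα hβ hβα hαβ himg
      have hM2 : (M.1 : Set H) = β '' (M'.1 : Set H) := by
        rw [hM, antiaut_image_comp_self hα β hβα]
      have hN2 : (N.1 : Set H) = β '' (N'.1 : Set H) := by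
        rw [hN, antiaut_image_comp_self hα β hβα]
      exact preserves_dir hcenter hdim hpar hβ himgβ M' N' M N hM2 hN2 h
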